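/- Let x : ℝ → ℝⁿ be a differentiable curve with x(t) ≠ 0 for all t ≥ 0 that solves the preconditioned gradient flow x'(t) = −B⁻¹∇f(x(t)), where ∇f(x) = (2/(xᵀMx))(Ax − f(x)Mx), and suppose x(0)ᵀB x(0) = 1. Then x(t)ᵀB x(t) = 1 for all t ≥ 0 (the flow stays on the B-sphere). -/

import Mathlib

open Matrix

/-- The preconditioned gradient flow stays on the B-sphere. -/
theorem statement_0 {n : ℕ} (hn : 2 ≤ n)
    (A M B : Matrix (Fin n) (Fin n) ℝ)
    (hA : A.PosDef) (hM : M.PosDef) (hB : B.PosDef)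
    (x : ℝ → (Fin n → ℝ))
    (hxne : ∀ t : ℝ, 0 ≤ t → x t ≠ 0)
    (hflow : ∀ t : ℝ, 0 ≤ t → HasDerivAt x
      (-(B⁻¹ *ᵥ ((2 / (x t ⬝ᵥ M *ᵥ x t)) •
        (A *ᵥ x t - ((x t ⬝ᵥ A *ᵥ x t) / (x t ⬝ᵥ M *ᵥ x t)) • (M *ᵥ x t))))) t)
    (hinit : x 0 ⬝ᵥ B *ᵥ x 0 = 1) :
    ∀ t : ℝ, 0 ≤ t → x t ⬝ᵥ B *ᵥ x t = 1 := by
  -- derivative of the quadratic form is zero at every t ≥ 0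
  have key : ∀ t : ℝ, 0 ≤ t →
      HasDerivAt (fun s => x s ⬝ᵥ B *ᵥ x s) 0 t := by
    intro t ht
    set v : Fin n → ℝ := (-(B⁻¹ *ᵥ ((2 / (x t ⬝ᵥ M *ᵥ x t)) •
        (A *ᵥ x t - ((x t ⬝ᵥ A *ᵥ x t) / (x t ⬝ᵥ M *ᵥ x t)) • (M *ᵥ x t))))) with hv
    have hx := hflow t ht
    have hcomp : ∀ i, HasDerivAt (fun s => x s i) (v i) t :=
      fun i => hasDerivAt_pi.1 hx i
    have hinner : ∀ i, HasDerivAt (fun s => ∑ j, B i j * x s j) (∑ j, B i j * v j) t :=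
      fun i => HasDerivAt.fun_sum fun j _ => (hcomp j).const_mul _
    have hder : HasDerivAt (fun s => x s ⬝ᵥ B *ᵥ x s)
        (∑ i, (v i * (∑ j, B i j * x t j) + x t i * (∑ j, B i j * v j))) t := by
      have := HasDerivAt.fun_sum (fun i (_ : i ∈ Finset.univ) => (hcomp i).mul (hinner i))
      simpa [dotProduct, mulVec, Pi.mul_apply] using this
    convert hder using 1
    -- show the derivative expression is zero
    have hMx : x t ⬝ᵥ M *ᵥ x t ≠ 0 := by
      have := hM.re_dotProduct_pos (hxne t ht)
      simpa [dotProduct, RCLike.re_to_real] using this.ne'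
    have hBinv : B * B⁻¹ = 1 := Matrix.mul_nonsing_inv B (isUnit_iff_ne_zero.2 hB.det_pos.ne')
    have hBv : B *ᵥ v = -((2 / (x t ⬝ᵥ M *ᵥ x t)) •
        (A *ᵥ x t - ((x t ⬝ᵥ A *ᵥ x t) / (x t ⬝ᵥ M *ᵥ x t)) • (M *ᵥ x t))) := by
      rw [hv, Matrix.mulVec_neg, Matrix.mulVec_mulVec, hBinv, Matrix.one_mulVec]
    have hxw : x t ⬝ᵥ (B *ᵥ v) = 0 := by
      rw [hBv]
      simp only [dotProduct_neg, dotProduct_smul, dotProduct_sub, smul_eq_mul]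
      field_simp
      ring
    have hterm2 : x t ⬝ᵥ B *ᵥ v = 0 := hxw
    have hBt : Bᵀ = B := by
      have := hB.1.eq
      simpa [Matrix.conjTranspose_eq_transpose_of_trivial] using this
    have hterm1 : v ⬝ᵥ B *ᵥ x t = 0 := by
      rw [Matrix.dotProduct_mulVec, ← Matrix.mulVec_transpose, hBt, dotProduct_comm]
      exact hterm2
    have : (∑ i, (v i * (∑ j, B i j * x t j) + x t i * (∑ j, B i j * v j)))
        = v ⬝ᵥ B *ᵥ x t + x t ⬝ᵥ B *ᵥ v := by
      simp [dotProduct, mulVec, Finset.sum_add_distrib]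
    rw [this, hterm1, hterm2, add_zero]
  intro t ht
  rcases eq_or_lt_of_le ht with rfl | ht'
  · exact hinit
  have hcont : ContinuousOn (fun s => x s ⬝ᵥ B *ᵥ x s) (Set.Icc 0 t) := by
    intro s hs
    exact ((key s hs.1).continuousAt).continuousWithinAt
  have := constant_of_has_deriv_right_zero hcont (fun s hs =>
    ((key s hs.1).hasDerivWithinAt)) t (Set.right_mem_Icc.2 ht)
  rw [this, hinit]
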